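/- Let n ∈ ℕ, let λ : Fin n → ℝ satisfy λ i ≥ 0 for all i and ∑_{i} λ i = 1, and let a, b, c ∈ ℝ. Suppose m, M, t : Fin n → ℝ satisfy, for every i: m i ≤ c ≤ M i and a − m i ≤ b − M i. Define p i = max(a − m i, min(t i, b − M i)). Then a ≤ (∑_{i} λ i · p i) + c ≤ b. -/
import Mathlib

/-- Pointwise content of Lemma `COR:positivity_preservation`: convex combinations
of truncated nodal values, shifted by the piecewise-constant value `c`,
stay in the invariant interval `[a, b]`. -/
theorem stmt_7 (n : ℕ) (lam : Fin n → ℝ)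
    (hlam : ∀ i, 0 ≤ lam i) (hsum : ∑ i, lam i = 1)
    (a b c : ℝ) (m M t : Fin n → ℝ)
    (hmc : ∀ i, m i ≤ c) (hcM : ∀ i, c ≤ M i)
    (hab : ∀ i, a - m i ≤ b - M i)
    (p : Fin n → ℝ)
    (hp : ∀ i, p i = max (a - m i) (min (t i) (b - M i))) :
    a ≤ (∑ i, lam i * p i) + c ∧ (∑ i, lam i * p i) + c ≤ b := by
  have hlo : ∀ i, a - c ≤ p i := fun i => by
    rw [hp i]
    exact le_trans (by linarith [hmc i]) (le_max_left _ _)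
  have hhi : ∀ i, p i ≤ b - c := fun i => by
    rw [hp i]
    have : max (a - m i) (min (t i) (b - M i)) ≤ b - M i :=
      max_le (hab i) (min_le_right _ _)
    linarith [hcM i]
  constructor
  · have : ∑ i, lam i * (a - c) ≤ ∑ i, lam i * p i :=
      Finset.sum_le_sum fun i _ => mul_le_mul_of_nonneg_left (hlo i) (hlam i)
    rw [← Finset.sum_mul, hsum, one_mul] at this
    linarith
  · have : ∑ i, lam i * p i ≤ ∑ i, lam i * (b - c) :=
      Finset.sum_le_sum fun i _ => mul_le_mul_of_nonneg_left (hhi i) (hlam i)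
    rw [← Finset.sum_mul, hsum, one_mul] at this
    linarith
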